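/- The pair (S, F_i) is an entropy pair for the inviscid (Euler) fluxes: for each i = 1, 2, 3 and every admissible primitive state v = (ρ, u₁, u₂, u₃, T) with ρ > 0 and T > 0, the compatibility identity w(v)ᵀ · J_{f_i}(v) = J_{F_i}(v) holds, where J_{f_i}(v) is the 5×5 Jacobian of the map v ↦ f_i(v) and J_{F_i}(v) is the 1×5 derivative of v ↦ F_i(v). Consequently, for any differentiable field x ↦ v(x), wᵀ ∂f_i/∂x = ∂F_i/∂x. -/

import Mathlib

open Matrix

noncomputable section

/-- Entropy variables `w(v) = (h/T - s - |u|²/(2T), u₁/T, u₂/T, u₃/T, -1/T)`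
with `s = c_v log T - R log ρ`, `h = c_p T`, `c_p = c_v + R`. -/
def entropyVarsMap (R cv : ℝ) (v : Fin 5 → ℝ) : Fin 5 → ℝ :=
  ![((cv + R) * v 4) / v 4 - (cv * Real.log (v 4) - R * Real.log (v 0))
      - ((v 1) ^ 2 + (v 2) ^ 2 + (v 3) ^ 2) / (2 * v 4),
    v 1 / v 4, v 2 / v 4, v 3 / v 4, -(1 / v 4)]

/-- Inviscid (Euler) flux in direction `x_i`:
`f_i(v) = (ρu_i, ρu_iu₁ + δ_{i1}p, ρu_iu₂ + δ_{i2}p, ρu_iu₃ + δ_{i3}p, u_i(ρE + p))`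
with `p = ρRT` and `E = c_v T + |u|²/2`, as a map of `v = (ρ, u₁, u₂, u₃, T)`. -/
def invFluxMap (R cv : ℝ) (i : Fin 3) (v : Fin 5 → ℝ) : Fin 5 → ℝ :=
  ![v 0 * ![v 1, v 2, v 3] i,
    v 0 * ![v 1, v 2, v 3] i * v 1 + (if i = 0 then v 0 * R * v 4 else 0),
    v 0 * ![v 1, v 2, v 3] i * v 2 + (if i = 1 then v 0 * R * v 4 else 0),
    v 0 * ![v 1, v 2, v 3] i * v 3 + (if i = 2 then v 0 * R * v 4 else 0),
    ![v 1, v 2, v 3] i *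
      (v 0 * (cv * v 4 + ((v 1) ^ 2 + (v 2) ^ 2 + (v 3) ^ 2) / 2) + v 0 * R * v 4)]

/-- Entropy flux `F_i(v) = -ρ u_i s`. -/
def entropyFluxMap (R cv : ℝ) (i : Fin 3) (v : Fin 5 → ℝ) : ℝ :=
  -(v 0 * ![v 1, v 2, v 3] i * (cv * Real.log (v 4) - R * Real.log (v 0)))

def P (j : Fin 5) : (Fin 5 → ℝ) →L[ℝ] ℝ := ContinuousLinearMap.proj j
@[simp] lemma P_apply (j : Fin 5) (d : Fin 5 → ℝ) : P j d = d j := rfl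

lemma aux0 (R cv : ℝ) (v : Fin 5 → ℝ) (h0 : 0 < v 0) (h4 : 0 < v 4) :
    DifferentiableAt ℝ (invFluxMap R cv 0) v ∧ DifferentiableAt ℝ (entropyFluxMap R cv 0) v ∧
    ∀ d, entropyVarsMap R cv v ⬝ᵥ fderiv ℝ (invFluxMap R cv 0) v d
        = fderiv ℝ (entropyFluxMap R cv 0) v d := by
  have hP : ∀ j : Fin 5, HasFDerivAt (fun v : Fin 5 → ℝ => v j) (P j) v :=
    fun j => (P j).hasFDerivAt
  have hlogT : HasFDerivAt (fun v : Fin 5 → ℝ => Real.log (v 4)) ((v 4)⁻¹ • P 4) v :=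
    by have := (Real.hasDerivAt_log h4.ne').comp_hasFDerivAt v (hP 4); exact this
  have hlogR : HasFDerivAt (fun v : Fin 5 → ℝ => Real.log (v 0)) ((v 0)⁻¹ • P 0) v :=
    by have := (Real.hasDerivAt_log h0.ne').comp_hasFDerivAt v (hP 0); exact this
  have e0 : (fun v : Fin 5 → ℝ => invFluxMap R cv 0 v 0) = fun v => v 0 * v 1 := by
    funext v; simp [invFluxMap]
  have e1 : (fun v : Fin 5 → ℝ => invFluxMap R cv 0 v 1)
      = fun v => v 0 * v 1 * v 1 + v 0 * R * v 4 := by funext v; simp [invFluxMap]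
  have e2 : (fun v : Fin 5 → ℝ => invFluxMap R cv 0 v 2) = fun v => v 0 * v 1 * v 2 := by
    funext v; simp [invFluxMap]
  have e3 : (fun v : Fin 5 → ℝ => invFluxMap R cv 0 v 3) = fun v => v 0 * v 1 * v 3 := by
    funext v; simp [invFluxMap]
  have e4 : (fun v : Fin 5 → ℝ => invFluxMap R cv 0 v 4)
      = fun v => v 1 * (v 0 * (cv * v 4 + (v 1 * v 1 + v 2 * v 2 + v 3 * v 3) * (2:ℝ)⁻¹) + v 0 * R * v 4) := by
    funext v; simp [invFluxMap, pow_two, div_eq_mul_inv]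
  have eF : (entropyFluxMap R cv 0)
      = fun v : Fin 5 → ℝ => -(v 0 * v 1 * (cv * Real.log (v 4) - R * Real.log (v 0))) := by
    funext v; simp [entropyFluxMap]
  have d0 : DifferentiableAt ℝ (fun v : Fin 5 → ℝ => invFluxMap R cv 0 v 0) v := by
    rw [e0]; exact ((hP 0).mul (hP 1)).differentiableAt
  have d1 : DifferentiableAt ℝ (fun v : Fin 5 → ℝ => invFluxMap R cv 0 v 1) v := by
    rw [e1]; exact ((((hP 0).mul (hP 1)).mul (hP 1)).add (((hP 0).mul_const R).mul (hP 4))).differentiableAt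
  have d2 : DifferentiableAt ℝ (fun v : Fin 5 → ℝ => invFluxMap R cv 0 v 2) v := by
    rw [e2]; exact (((hP 0).mul (hP 1)).mul (hP 2)).differentiableAt
  have d3 : DifferentiableAt ℝ (fun v : Fin 5 → ℝ => invFluxMap R cv 0 v 3) v := by
    rw [e3]; exact (((hP 0).mul (hP 1)).mul (hP 3)).differentiableAt
  have d4 : DifferentiableAt ℝ (fun v : Fin 5 → ℝ => invFluxMap R cv 0 v 4) v := by
    rw [e4]
    exact ((hP 1).mul (((hP 0).mul (((hP 4).const_mul cv).add
      ((((hP 1).mul (hP 1)).add ((hP 2).mul (hP 2)) |>.add ((hP 3).mul (hP 3))).mul_const ((2:ℝ)⁻¹)))).add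
      (((hP 0).mul_const R).mul (hP 4)))).differentiableAt
  have hFd : HasFDerivAt (entropyFluxMap R cv 0)
      (-((v 0 * v 1) • ((cv • ((v 4)⁻¹ • P 4)) - (R • ((v 0)⁻¹ • P 0)))
        + (cv * Real.log (v 4) - R * Real.log (v 0)) • (v 0 • P 1 + v 1 • P 0))) v := by
    rw [eF]
    exact (((hP 0).mul (hP 1)).mul ((hlogT.const_mul cv).sub (hlogR.const_mul R))).neg
  have hdiffF : ∀ j, DifferentiableAt ℝ (fun v => invFluxMap R cv 0 v j) v := by
    intro j; fin_cases j; exacts [d0, d1, d2, d3, d4]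
  refine ⟨differentiableAt_pi.2 hdiffF, hFd.differentiableAt, ?_⟩
  intro d
  have hfd : fderiv ℝ (invFluxMap R cv 0) v
      = ContinuousLinearMap.pi (fun j => fderiv ℝ (fun v => invFluxMap R cv 0 v j) v) :=
    fderiv_pi hdiffF
  have g0 : fderiv ℝ (fun v : Fin 5 → ℝ => invFluxMap R cv 0 v 0) v d
      = v 0 * d 1 + v 1 * d 0 := by
    have hH := ((hP 0).mul (hP 1)).fderiv; simp only [Pi.mul_def, Pi.add_def] at hH; rw [e0, hH]; simp
  have g1 : fderiv ℝ (fun v : Fin 5 → ℝ => invFluxMap R cv 0 v 1) v d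
      = v 0 * v 1 * d 1 + v 1 * (v 0 * d 1 + v 1 * d 0) + (v 0 * R * d 4 + v 4 * (R * d 0)) := by
    have hH := ((((hP 0).mul (hP 1)).mul (hP 1)).add (((hP 0).mul_const R).mul (hP 4))).fderiv; simp only [Pi.mul_def, Pi.add_def] at hH; rw [e1, hH]; simp; ring
  have g2 : fderiv ℝ (fun v : Fin 5 → ℝ => invFluxMap R cv 0 v 2) v d
      = v 0 * v 1 * d 2 + v 2 * (v 0 * d 1 + v 1 * d 0) := by
    have hH := (((hP 0).mul (hP 1)).mul (hP 2)).fderiv; simp only [Pi.mul_def, Pi.add_def] at hH; rw [e2, hH]; simp; ring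
  have g3 : fderiv ℝ (fun v : Fin 5 → ℝ => invFluxMap R cv 0 v 3) v d
      = v 0 * v 1 * d 3 + v 3 * (v 0 * d 1 + v 1 * d 0) := by
    have hH := (((hP 0).mul (hP 1)).mul (hP 3)).fderiv; simp only [Pi.mul_def, Pi.add_def] at hH; rw [e3, hH]; simp; ring
  have g4 : fderiv ℝ (fun v : Fin 5 → ℝ => invFluxMap R cv 0 v 4) v d
      = v 1 * (v 0 * (cv * d 4 + (v 1 * d 1 + v 2 * d 2 + v 3 * d 3))
          + (cv * v 4 + (v 1 * v 1 + v 2 * v 2 + v 3 * v 3) / 2) * d 0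
          + (v 0 * R * d 4 + v 4 * (R * d 0)))
        + (v 0 * (cv * v 4 + (v 1 * v 1 + v 2 * v 2 + v 3 * v 3) / 2) + v 0 * R * v 4) * d 1 := by
    have hH := ((hP 1).mul (((hP 0).mul (((hP 4).const_mul cv).add
      ((((hP 1).mul (hP 1)).add ((hP 2).mul (hP 2)) |>.add ((hP 3).mul (hP 3))).mul_const ((2:ℝ)⁻¹)))).add
      (((hP 0).mul_const R).mul (hP 4)))).fderiv; simp only [Pi.mul_def, Pi.add_def] at hH; rw [e4, hH]
    simp; ring
  have gF : fderiv ℝ (entropyFluxMap R cv 0) v d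
      = -((v 0 * v 1) * (cv * ((v 4)⁻¹ * d 4) - R * ((v 0)⁻¹ * d 0))
        + (cv * Real.log (v 4) - R * Real.log (v 0)) * (v 0 * d 1 + v 1 * d 0)) := by
    rw [hFd.fderiv]; simp; ring
  rw [hfd, gF]
  simp only [ContinuousLinearMap.pi_apply, dotProduct, Fin.sum_univ_five]
  rw [g0, g1, g2, g3, g4]
  simp only [entropyVarsMap, Matrix.cons_val_zero, Matrix.cons_val_one, Matrix.head_cons,
    Matrix.cons_val_two, Matrix.tail_cons, Matrix.cons_val_three, Matrix.cons_val_four]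
  field_simp
  ring

lemma aux1 (R cv : ℝ) (v : Fin 5 → ℝ) (h0 : 0 < v 0) (h4 : 0 < v 4) :
    DifferentiableAt ℝ (invFluxMap R cv 1) v ∧ DifferentiableAt ℝ (entropyFluxMap R cv 1) v ∧
    ∀ d, entropyVarsMap R cv v ⬝ᵥ fderiv ℝ (invFluxMap R cv 1) v d
        = fderiv ℝ (entropyFluxMap R cv 1) v d := by
  have hP : ∀ j : Fin 5, HasFDerivAt (fun v : Fin 5 → ℝ => v j) (P j) v :=
    fun j => (P j).hasFDerivAt
  have hlogT : HasFDerivAt (fun v : Fin 5 → ℝ => Real.log (v 4)) ((v 4)⁻¹ • P 4) v :=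
    by have := (Real.hasDerivAt_log h4.ne').comp_hasFDerivAt v (hP 4); exact this
  have hlogR : HasFDerivAt (fun v : Fin 5 → ℝ => Real.log (v 0)) ((v 0)⁻¹ • P 0) v :=
    by have := (Real.hasDerivAt_log h0.ne').comp_hasFDerivAt v (hP 0); exact this
  have e0 : (fun v : Fin 5 → ℝ => invFluxMap R cv 1 v 0) = fun v => v 0 * v 2 := by
    funext v; simp [invFluxMap]
  have e1 : (fun v : Fin 5 → ℝ => invFluxMap R cv 1 v 2)
      = fun v => v 0 * v 2 * v 2 + v 0 * R * v 4 := by funext v; simp [invFluxMap]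
  have e2 : (fun v : Fin 5 → ℝ => invFluxMap R cv 1 v 1) = fun v => v 0 * v 2 * v 1 := by
    funext v; simp [invFluxMap]
  have e3 : (fun v : Fin 5 → ℝ => invFluxMap R cv 1 v 3) = fun v => v 0 * v 2 * v 3 := by
    funext v; simp [invFluxMap]
  have e4 : (fun v : Fin 5 → ℝ => invFluxMap R cv 1 v 4)
      = fun v => v 2 * (v 0 * (cv * v 4 + (v 1 * v 1 + v 2 * v 2 + v 3 * v 3) * (2:ℝ)⁻¹) + v 0 * R * v 4) := by
    funext v; simp [invFluxMap, pow_two, div_eq_mul_inv]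
  have eF : (entropyFluxMap R cv 1)
      = fun v : Fin 5 → ℝ => -(v 0 * v 2 * (cv * Real.log (v 4) - R * Real.log (v 0))) := by
    funext v; simp [entropyFluxMap]
  have d0 : DifferentiableAt ℝ (fun v : Fin 5 → ℝ => invFluxMap R cv 1 v 0) v := by
    rw [e0]; exact ((hP 0).mul (hP 2)).differentiableAt
  have d1 : DifferentiableAt ℝ (fun v : Fin 5 → ℝ => invFluxMap R cv 1 v 2) v := by
    rw [e1]; exact ((((hP 0).mul (hP 2)).mul (hP 2)).add (((hP 0).mul_const R).mul (hP 4))).differentiableAt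
  have d2 : DifferentiableAt ℝ (fun v : Fin 5 → ℝ => invFluxMap R cv 1 v 1) v := by
    rw [e2]; exact (((hP 0).mul (hP 2)).mul (hP 1)).differentiableAt
  have d3 : DifferentiableAt ℝ (fun v : Fin 5 → ℝ => invFluxMap R cv 1 v 3) v := by
    rw [e3]; exact (((hP 0).mul (hP 2)).mul (hP 3)).differentiableAt
  have d4 : DifferentiableAt ℝ (fun v : Fin 5 → ℝ => invFluxMap R cv 1 v 4) v := by
    rw [e4]
    exact ((hP 2).mul (((hP 0).mul (((hP 4).const_mul cv).add
      ((((hP 1).mul (hP 1)).add ((hP 2).mul (hP 2)) |>.add ((hP 3).mul (hP 3))).mul_const ((2:ℝ)⁻¹)))).add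
      (((hP 0).mul_const R).mul (hP 4)))).differentiableAt
  have hFd : HasFDerivAt (entropyFluxMap R cv 1)
      (-((v 0 * v 2) • ((cv • ((v 4)⁻¹ • P 4)) - (R • ((v 0)⁻¹ • P 0)))
        + (cv * Real.log (v 4) - R * Real.log (v 0)) • (v 0 • P 2 + v 2 • P 0))) v := by
    rw [eF]
    exact (((hP 0).mul (hP 2)).mul ((hlogT.const_mul cv).sub (hlogR.const_mul R))).neg
  have hdiffF : ∀ j, DifferentiableAt ℝ (fun v => invFluxMap R cv 1 v j) v := by
    intro j; fin_cases j; exacts [d0, d2, d1, d3, d4]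
  refine ⟨differentiableAt_pi.2 hdiffF, hFd.differentiableAt, ?_⟩
  intro d
  have hfd : fderiv ℝ (invFluxMap R cv 1) v
      = ContinuousLinearMap.pi (fun j => fderiv ℝ (fun v => invFluxMap R cv 1 v j) v) :=
    fderiv_pi hdiffF
  have g0 : fderiv ℝ (fun v : Fin 5 → ℝ => invFluxMap R cv 1 v 0) v d
      = v 0 * d 2 + v 2 * d 0 := by
    have hH := ((hP 0).mul (hP 2)).fderiv; simp only [Pi.mul_def, Pi.add_def] at hH; rw [e0, hH]; simp
  have g1 : fderiv ℝ (fun v : Fin 5 → ℝ => invFluxMap R cv 1 v 2) v d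
      = v 0 * v 2 * d 2 + v 2 * (v 0 * d 2 + v 2 * d 0) + (v 0 * R * d 4 + v 4 * (R * d 0)) := by
    have hH := ((((hP 0).mul (hP 2)).mul (hP 2)).add (((hP 0).mul_const R).mul (hP 4))).fderiv; simp only [Pi.mul_def, Pi.add_def] at hH; rw [e1, hH]; simp; ring
  have g2 : fderiv ℝ (fun v : Fin 5 → ℝ => invFluxMap R cv 1 v 1) v d
      = v 0 * v 2 * d 1 + v 1 * (v 0 * d 2 + v 2 * d 0) := by
    have hH := (((hP 0).mul (hP 2)).mul (hP 1)).fderiv; simp only [Pi.mul_def, Pi.add_def] at hH; rw [e2, hH]; simp; ring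
  have g3 : fderiv ℝ (fun v : Fin 5 → ℝ => invFluxMap R cv 1 v 3) v d
      = v 0 * v 2 * d 3 + v 3 * (v 0 * d 2 + v 2 * d 0) := by
    have hH := (((hP 0).mul (hP 2)).mul (hP 3)).fderiv; simp only [Pi.mul_def, Pi.add_def] at hH; rw [e3, hH]; simp; ring
  have g4 : fderiv ℝ (fun v : Fin 5 → ℝ => invFluxMap R cv 1 v 4) v d
      = v 2 * (v 0 * (cv * d 4 + (v 1 * d 1 + v 2 * d 2 + v 3 * d 3))
          + (cv * v 4 + (v 1 * v 1 + v 2 * v 2 + v 3 * v 3) / 2) * d 0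
          + (v 0 * R * d 4 + v 4 * (R * d 0)))
        + (v 0 * (cv * v 4 + (v 1 * v 1 + v 2 * v 2 + v 3 * v 3) / 2) + v 0 * R * v 4) * d 2 := by
    have hH := ((hP 2).mul (((hP 0).mul (((hP 4).const_mul cv).add
      ((((hP 1).mul (hP 1)).add ((hP 2).mul (hP 2)) |>.add ((hP 3).mul (hP 3))).mul_const ((2:ℝ)⁻¹)))).add
      (((hP 0).mul_const R).mul (hP 4)))).fderiv; simp only [Pi.mul_def, Pi.add_def] at hH; rw [e4, hH]
    simp; ring
  have gF : fderiv ℝ (entropyFluxMap R cv 1) v d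
      = -((v 0 * v 2) * (cv * ((v 4)⁻¹ * d 4) - R * ((v 0)⁻¹ * d 0))
        + (cv * Real.log (v 4) - R * Real.log (v 0)) * (v 0 * d 2 + v 2 * d 0)) := by
    rw [hFd.fderiv]; simp; ring
  rw [hfd, gF]
  simp only [ContinuousLinearMap.pi_apply, dotProduct, Fin.sum_univ_five]
  rw [g0, g1, g2, g3, g4]
  simp only [entropyVarsMap, Matrix.cons_val_zero, Matrix.cons_val_one, Matrix.head_cons,
    Matrix.cons_val_two, Matrix.tail_cons, Matrix.cons_val_three, Matrix.cons_val_four]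
  field_simp
  ring

lemma aux2 (R cv : ℝ) (v : Fin 5 → ℝ) (h0 : 0 < v 0) (h4 : 0 < v 4) :
    DifferentiableAt ℝ (invFluxMap R cv 2) v ∧ DifferentiableAt ℝ (entropyFluxMap R cv 2) v ∧
    ∀ d, entropyVarsMap R cv v ⬝ᵥ fderiv ℝ (invFluxMap R cv 2) v d
        = fderiv ℝ (entropyFluxMap R cv 2) v d := by
  have hP : ∀ j : Fin 5, HasFDerivAt (fun v : Fin 5 → ℝ => v j) (P j) v :=
    fun j => (P j).hasFDerivAt
  have hlogT : HasFDerivAt (fun v : Fin 5 → ℝ => Real.log (v 4)) ((v 4)⁻¹ • P 4) v :=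
    by have := (Real.hasDerivAt_log h4.ne').comp_hasFDerivAt v (hP 4); exact this
  have hlogR : HasFDerivAt (fun v : Fin 5 → ℝ => Real.log (v 0)) ((v 0)⁻¹ • P 0) v :=
    by have := (Real.hasDerivAt_log h0.ne').comp_hasFDerivAt v (hP 0); exact this
  have e0 : (fun v : Fin 5 → ℝ => invFluxMap R cv 2 v 0) = fun v => v 0 * v 3 := by
    funext v; simp [invFluxMap]
  have e1 : (fun v : Fin 5 → ℝ => invFluxMap R cv 2 v 3)
      = fun v => v 0 * v 3 * v 3 + v 0 * R * v 4 := by funext v; simp [invFluxMap]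
  have e2 : (fun v : Fin 5 → ℝ => invFluxMap R cv 2 v 2) = fun v => v 0 * v 3 * v 2 := by
    funext v; simp [invFluxMap]
  have e3 : (fun v : Fin 5 → ℝ => invFluxMap R cv 2 v 1) = fun v => v 0 * v 3 * v 1 := by
    funext v; simp [invFluxMap]
  have e4 : (fun v : Fin 5 → ℝ => invFluxMap R cv 2 v 4)
      = fun v => v 3 * (v 0 * (cv * v 4 + (v 1 * v 1 + v 2 * v 2 + v 3 * v 3) * (2:ℝ)⁻¹) + v 0 * R * v 4) := by
    funext v; simp [invFluxMap, pow_two, div_eq_mul_inv]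
  have eF : (entropyFluxMap R cv 2)
      = fun v : Fin 5 → ℝ => -(v 0 * v 3 * (cv * Real.log (v 4) - R * Real.log (v 0))) := by
    funext v; simp [entropyFluxMap]
  have d0 : DifferentiableAt ℝ (fun v : Fin 5 → ℝ => invFluxMap R cv 2 v 0) v := by
    rw [e0]; exact ((hP 0).mul (hP 3)).differentiableAt
  have d1 : DifferentiableAt ℝ (fun v : Fin 5 → ℝ => invFluxMap R cv 2 v 3) v := by
    rw [e1]; exact ((((hP 0).mul (hP 3)).mul (hP 3)).add (((hP 0).mul_const R).mul (hP 4))).differentiableAt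
  have d2 : DifferentiableAt ℝ (fun v : Fin 5 → ℝ => invFluxMap R cv 2 v 2) v := by
    rw [e2]; exact (((hP 0).mul (hP 3)).mul (hP 2)).differentiableAt
  have d3 : DifferentiableAt ℝ (fun v : Fin 5 → ℝ => invFluxMap R cv 2 v 1) v := by
    rw [e3]; exact (((hP 0).mul (hP 3)).mul (hP 1)).differentiableAt
  have d4 : DifferentiableAt ℝ (fun v : Fin 5 → ℝ => invFluxMap R cv 2 v 4) v := by
    rw [e4]
    exact ((hP 3).mul (((hP 0).mul (((hP 4).const_mul cv).add
      ((((hP 1).mul (hP 1)).add ((hP 2).mul (hP 2)) |>.add ((hP 3).mul (hP 3))).mul_const ((2:ℝ)⁻¹)))).add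
      (((hP 0).mul_const R).mul (hP 4)))).differentiableAt
  have hFd : HasFDerivAt (entropyFluxMap R cv 2)
      (-((v 0 * v 3) • ((cv • ((v 4)⁻¹ • P 4)) - (R • ((v 0)⁻¹ • P 0)))
        + (cv * Real.log (v 4) - R * Real.log (v 0)) • (v 0 • P 3 + v 3 • P 0))) v := by
    rw [eF]
    exact (((hP 0).mul (hP 3)).mul ((hlogT.const_mul cv).sub (hlogR.const_mul R))).neg
  have hdiffF : ∀ j, DifferentiableAt ℝ (fun v => invFluxMap R cv 2 v j) v := by
    intro j; fin_cases j; exacts [d0, d3, d2, d1, d4]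
  refine ⟨differentiableAt_pi.2 hdiffF, hFd.differentiableAt, ?_⟩
  intro d
  have hfd : fderiv ℝ (invFluxMap R cv 2) v
      = ContinuousLinearMap.pi (fun j => fderiv ℝ (fun v => invFluxMap R cv 2 v j) v) :=
    fderiv_pi hdiffF
  have g0 : fderiv ℝ (fun v : Fin 5 → ℝ => invFluxMap R cv 2 v 0) v d
      = v 0 * d 3 + v 3 * d 0 := by
    have hH := ((hP 0).mul (hP 3)).fderiv; simp only [Pi.mul_def, Pi.add_def] at hH; rw [e0, hH]; simp
  have g1 : fderiv ℝ (fun v : Fin 5 → ℝ => invFluxMap R cv 2 v 3) v d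
      = v 0 * v 3 * d 3 + v 3 * (v 0 * d 3 + v 3 * d 0) + (v 0 * R * d 4 + v 4 * (R * d 0)) := by
    have hH := ((((hP 0).mul (hP 3)).mul (hP 3)).add (((hP 0).mul_const R).mul (hP 4))).fderiv; simp only [Pi.mul_def, Pi.add_def] at hH; rw [e1, hH]; simp; ring
  have g2 : fderiv ℝ (fun v : Fin 5 → ℝ => invFluxMap R cv 2 v 2) v d
      = v 0 * v 3 * d 2 + v 2 * (v 0 * d 3 + v 3 * d 0) := by
    have hH := (((hP 0).mul (hP 3)).mul (hP 2)).fderiv; simp only [Pi.mul_def, Pi.add_def] at hH; rw [e2, hH]; simp; ring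
  have g3 : fderiv ℝ (fun v : Fin 5 → ℝ => invFluxMap R cv 2 v 1) v d
      = v 0 * v 3 * d 1 + v 1 * (v 0 * d 3 + v 3 * d 0) := by
    have hH := (((hP 0).mul (hP 3)).mul (hP 1)).fderiv; simp only [Pi.mul_def, Pi.add_def] at hH; rw [e3, hH]; simp; ring
  have g4 : fderiv ℝ (fun v : Fin 5 → ℝ => invFluxMap R cv 2 v 4) v d
      = v 3 * (v 0 * (cv * d 4 + (v 1 * d 1 + v 2 * d 2 + v 3 * d 3))
          + (cv * v 4 + (v 1 * v 1 + v 2 * v 2 + v 3 * v 3) / 2) * d 0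
          + (v 0 * R * d 4 + v 4 * (R * d 0)))
        + (v 0 * (cv * v 4 + (v 1 * v 1 + v 2 * v 2 + v 3 * v 3) / 2) + v 0 * R * v 4) * d 3 := by
    have hH := ((hP 3).mul (((hP 0).mul (((hP 4).const_mul cv).add
      ((((hP 1).mul (hP 1)).add ((hP 2).mul (hP 2)) |>.add ((hP 3).mul (hP 3))).mul_const ((2:ℝ)⁻¹)))).add
      (((hP 0).mul_const R).mul (hP 4)))).fderiv; simp only [Pi.mul_def, Pi.add_def] at hH; rw [e4, hH]
    simp; ring
  have gF : fderiv ℝ (entropyFluxMap R cv 2) v d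
      = -((v 0 * v 3) * (cv * ((v 4)⁻¹ * d 4) - R * ((v 0)⁻¹ * d 0))
        + (cv * Real.log (v 4) - R * Real.log (v 0)) * (v 0 * d 3 + v 3 * d 0)) := by
    rw [hFd.fderiv]; simp; ring
  rw [hfd, gF]
  simp only [ContinuousLinearMap.pi_apply, dotProduct, Fin.sum_univ_five]
  rw [g0, g1, g2, g3, g4]
  simp only [entropyVarsMap, Matrix.cons_val_zero, Matrix.cons_val_one, Matrix.head_cons,
    Matrix.cons_val_two, Matrix.tail_cons, Matrix.cons_val_three, Matrix.cons_val_four]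
  field_simp
  ring


/-- the pair `(S, F_i)` is an entropy pair for the inviscid
(Euler) fluxes: for each `i` and every admissible state `v` (`ρ > 0`, `T > 0`)
the compatibility identity `w(v)ᵀ · J_{f_i}(v) = J_{F_i}(v)` holds (stated as
an identity of linear maps applied to an arbitrary direction `d`);
consequently, for any differentiable field `x ↦ v(x)` (with admissible values),
`wᵀ ∂f_i/∂x = ∂F_i/∂x`. -/
theorem entropy_pair_compatibility
    (R cv : ℝ) (hR : 0 < R) (hcv : 0 < cv) (i : Fin 3) :
    (∀ v : Fin 5 → ℝ, 0 < v 0 → 0 < v 4 →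
      ∀ d : Fin 5 → ℝ,
        entropyVarsMap R cv v ⬝ᵥ fderiv ℝ (invFluxMap R cv i) v d
          = fderiv ℝ (entropyFluxMap R cv i) v d) ∧
    (∀ (vf : ℝ → Fin 5 → ℝ) (x : ℝ), DifferentiableAt ℝ vf x →
      0 < vf x 0 → 0 < vf x 4 →
        entropyVarsMap R cv (vf x) ⬝ᵥ deriv (fun y => invFluxMap R cv i (vf y)) x
          = deriv (fun y => entropyFluxMap R cv i (vf y)) x) := by
  have main : ∀ v : Fin 5 → ℝ, 0 < v 0 → 0 < v 4 →
      DifferentiableAt ℝ (invFluxMap R cv i) v ∧ DifferentiableAt ℝ (entropyFluxMap R cv i) v ∧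
      ∀ d, entropyVarsMap R cv v ⬝ᵥ fderiv ℝ (invFluxMap R cv i) v d
          = fderiv ℝ (entropyFluxMap R cv i) v d := by
    intro v h0 h4
    fin_cases i
    · exact aux0 R cv v h0 h4
    · exact aux1 R cv v h0 h4
    · exact aux2 R cv v h0 h4
  constructor
  · intro v h0 h4 d
    exact (main v h0 h4).2.2 d
  · intro vf x hvf h0 h4
    obtain ⟨hdf, hdF, hkey⟩ := main (vf x) h0 h4
    have h1 : HasDerivAt (fun y => invFluxMap R cv i (vf y))
        (fderiv ℝ (invFluxMap R cv i) (vf x) (deriv vf x)) x :=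
      hdf.hasFDerivAt.comp_hasDerivAt x hvf.hasDerivAt
    have h2 : HasDerivAt (fun y => entropyFluxMap R cv i (vf y))
        (fderiv ℝ (entropyFluxMap R cv i) (vf x) (deriv vf x)) x :=
      hdF.hasFDerivAt.comp_hasDerivAt x hvf.hasDerivAt
    rw [h1.deriv, h2.deriv]
    exact hkey (deriv vf x)
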